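/- Let σ act on S = F[x_1,…,x_m,y_1,…,y_m] as described. Then the invariant ring S^σ is generated as an F-algebra by the set {n_1,…,n_m} ∪ {Δ(β) : β a monomial dividing y_1⋯y_m}. -/

import Mathlib

/-!
STATEMENT 0: Let σ act on S = F[x_1,…,x_m,y_1,…,y_m] by σ(x_j) = x_j, σ(y_j) = y_j + x_j,
over a field F of characteristic 2.  Then S^σ is generated as an F-algebra by
{n_1,…,n_m} ∪ {Δ(β) : β a monomial dividing y_1⋯y_m}, where n_i = y_i² + x_i y_i and
Δ(f) = σ(f) − f.  Variables: `X (Sum.inl j)` is x_j and `X (Sum.inr j)` is y_j; monomials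
dividing y_1⋯y_m are the products ∏_{j ∈ J} y_j over subsets J.
-/

open MvPolynomial

open Finset
set_option linter.unusedSectionVars false

namespace Stmt0

variable {F : Type} [Field F] [CharP F 2] {m : ℕ}

abbrev SS (F : Type) [Field F] (m : ℕ) := MvPolynomial (Fin m ⊕ Fin m) F

noncomputable def xx (j : Fin m) : SS F m := X (Sum.inl j)
noncomputable def yy (j : Fin m) : SS F m := X (Sum.inr j)
noncomputable def nn (j : Fin m) : SS F m := yy j ^ 2 + xx j * yy j
noncomputable def phi : SS F m →ₐ[F] SS F m := aeval (Sum.elim xx nn)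
noncomputable def ymon (J : Finset (Fin m)) : SS F m := ∏ j ∈ J, yy j
noncomputable def xmon (K : Finset (Fin m)) : SS F m := ∏ j ∈ K, xx j
noncomputable def Psi (c : Finset (Fin m) → SS F m) : SS F m :=
  ∑ J : Finset (Fin m), phi (c J) * ymon J
noncomputable def DD (c : Finset (Fin m) → SS F m) (I : Finset (Fin m)) : SS F m :=
  ∑ J ∈ Finset.univ.filter (fun J => I ⊂ J), xmon (J \ I) * c J

lemma two_zero : (2 : SS F m) = 0 := CharTwo.two_eq_zero

lemma phi_X_inl (j : Fin m) : phi (X (Sum.inl j) : SS F m) = xx j := by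
  simp [phi]

lemma phi_X_inr (j : Fin m) : phi (X (Sum.inr j) : SS F m) = nn j := by
  simp [phi]

lemma phi_xmon (K : Finset (Fin m)) : phi (xmon K : SS F m) = xmon K := by
  unfold xmon
  rw [map_prod]
  simp [xx, phi_X_inl]

section Sigma
variable (σ : SS F m ≃ₐ[F] SS F m)
  (hx : ∀ j : Fin m, σ (X (Sum.inl j)) = X (Sum.inl j))
  (hy : ∀ j : Fin m, σ (X (Sum.inr j)) = X (Sum.inr j) + X (Sum.inl j))

include hx hy

lemma sig_nn (j : Fin m) : σ (nn j) = nn j := by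
  have h2 := (two_zero : (2 : SS F m) = 0)
  simp only [nn, xx, yy, map_add, map_mul, map_pow, hx, hy]
  linear_combination (X (Sum.inl j) * X (Sum.inr j) + X (Sum.inl j)^2) * h2

lemma sig_phi (p : SS F m) : σ (phi p) = phi p := by
  have : (σ.toAlgHom.comp phi : SS F m →ₐ[F] SS F m) = phi := by
    apply MvPolynomial.algHom_ext
    rintro (j | j)
    · simp only [AlgHom.comp_apply, AlgEquiv.toAlgHom_eq_coe, AlgHom.coe_coe]
      rw [phi_X_inl]
      exact hx j
    · simp only [AlgHom.comp_apply, AlgEquiv.toAlgHom_eq_coe, AlgHom.coe_coe]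
      rw [phi_X_inr]
      exact sig_nn σ hx hy j
  exact congrArg (fun ψ => ψ p) this

lemma sig_sq (f : SS F m) : σ (σ f) = f := by
  have h2 := (two_zero : (2 : SS F m) = 0)
  have : ((σ.toAlgHom.comp σ.toAlgHom : SS F m →ₐ[F] SS F m)) = AlgHom.id F _ := by
    apply MvPolynomial.algHom_ext
    rintro (j | j)
    · simp [hx]
    · simp only [AlgHom.comp_apply, AlgEquiv.toAlgHom_eq_coe, AlgHom.coe_coe, AlgHom.id_apply,
        hy, map_add, hx]
      change σ (σ (X (Sum.inr j))) = X (Sum.inr j)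
      rw [hy, map_add, hx, hy]
      linear_combination (X (Sum.inl j)) * h2
  exact congrArg (fun ψ => ψ f) this

lemma sig_ymon (J : Finset (Fin m)) :
    σ (ymon J) = ∑ K ∈ J.powerset, xmon K * ymon (J \ K) := by
  unfold ymon
  rw [map_prod]
  have : ∀ j ∈ J, σ (yy j) = xx j + yy j := by
    intro j _
    rw [yy, hy j]
    ring_nf
    rfl
  rw [Finset.prod_congr rfl this]
  rw [Finset.prod_add]
  rfl

end Sigma

lemma Psi_add (c d : Finset (Fin m) → SS F m) :
    Psi (fun J => c J + d J) = Psi c + Psi d := by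
  unfold Psi
  rw [← Finset.sum_add_distrib]
  refine Finset.sum_congr rfl fun J _ => by rw [map_add, add_mul]

lemma y_sq (j : Fin m) : (yy j : SS F m) ^ 2 = nn j + xx j * yy j := by
  have h2 := (two_zero : (2 : SS F m) = 0)
  unfold nn
  linear_combination (-(xx j * yy j)) * h2

lemma sum_insert_reindex (j : Fin m) (g : Finset (Fin m) → SS F m)
    (h : Finset (Fin m) → SS F m)
    (hgh : ∀ J, j ∉ J → g J = h (insert j J)) :
    ∑ J ∈ Finset.univ.filter (fun J => j ∉ J), g J
      = ∑ I ∈ Finset.univ.filter (fun I => j ∈ I), h I := by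
  refine Finset.sum_nbij' (insert j) (Finset.erase · j) ?_ ?_ ?_ ?_ ?_
  · intro J hJ
    simp only [Finset.mem_filter, Finset.mem_univ, true_and] at hJ ⊢
    exact Finset.mem_insert_self j J
  · intro I hI
    simp only [Finset.mem_filter, Finset.mem_univ, true_and] at hI ⊢
    exact Finset.notMem_erase j I
  · intro J hJ
    simp only [Finset.mem_filter, Finset.mem_univ, true_and] at hJ
    exact Finset.erase_insert hJ
  · intro I hI
    simp only [Finset.mem_filter, Finset.mem_univ, true_and] at hI
    exact Finset.insert_erase hI
  · intro J hJ
    simp only [Finset.mem_filter, Finset.mem_univ, true_and] at hJ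
    exact hgh J hJ

lemma Psi_surj (f : SS F m) : ∃ c, Psi c = f := by
  induction f using MvPolynomial.induction_on with
  | C a =>
      refine ⟨fun J => if J = ∅ then C a else 0, ?_⟩
      unfold Psi
      rw [Finset.sum_eq_single ∅]
      · simp [ymon, phi]
      · intro J _ hJ; simp [hJ]
      · simp
  | add p q hp hq =>
      obtain ⟨c, hc⟩ := hp; obtain ⟨d, hd⟩ := hq
      exact ⟨fun J => c J + d J, by rw [Psi_add, hc, hd]⟩
  | mul_X p v hp =>
      obtain ⟨c, hc⟩ := hp
      obtain (j | j) := v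
      · refine ⟨fun J => X (Sum.inl j) * c J, ?_⟩
        unfold Psi at hc ⊢
        rw [← hc, Finset.sum_mul]
        refine Finset.sum_congr rfl fun J _ => ?_
        rw [map_mul, phi_X_inl]
        unfold xx; ring
      · set cc : Finset (Fin m) → SS F m := fun I =>
          if j ∈ I then c (I.erase j) + X (Sum.inl j) * c I
          else X (Sum.inr j) * c (insert j I) with hcc
        refine ⟨cc, ?_⟩
        rw [← hc]
        unfold Psi
        rw [Finset.sum_mul]
        rw [← Finset.sum_filter_add_sum_filter_not Finset.univ (fun J => j ∈ J)
            (fun J => phi (cc J) * ymon J),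
          ← Finset.sum_filter_add_sum_filter_not Finset.univ (fun J => j ∈ J)
            (fun J => phi (c J) * ymon J * X (Sum.inr j))]
        have key1 : ∑ J ∈ Finset.univ.filter (fun J => j ∈ J), phi (cc J) * ymon J
            = ∑ J ∈ Finset.univ.filter (fun J => j ∈ J),
                (phi (c (J.erase j)) * ymon J + phi (c J) * (xx j * ymon J)) := by
          refine Finset.sum_congr rfl fun J hJ => ?_
          simp only [Finset.mem_filter, Finset.mem_univ, true_and] at hJ
          rw [hcc]
          simp only [if_pos hJ, map_add, map_mul, phi_X_inl]
          ring
        have key2 : ∑ J ∈ Finset.univ.filter (fun J => j ∈ J),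
              phi (c J) * ymon J * X (Sum.inr j)
            = ∑ J ∈ Finset.univ.filter (fun J => j ∈ J),
                (phi (c J) * (nn j * ymon (J.erase j)) + phi (c J) * (xx j * ymon J)) := by
          refine Finset.sum_congr rfl fun J hJ => ?_
          simp only [Finset.mem_filter, Finset.mem_univ, true_and] at hJ
          have hJ2 : ymon J = yy j * ymon (J.erase j) := (Finset.mul_prod_erase J (yy (F := F)) hJ).symm
          have : phi (c J) * ymon J * X (Sum.inr j)
              = phi (c J) * ((yy j : SS F m)^2 * ymon (J.erase j)) := by
            rw [hJ2]; unfold yy; ring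
          rw [this, y_sq, hJ2]; ring
        have keyA : ∑ J ∈ Finset.univ.filter (fun J => ¬ j ∈ J), phi (cc J) * ymon J
            = ∑ I ∈ Finset.univ.filter (fun I => j ∈ I),
                phi (c I) * (nn j * ymon (I.erase j)) := by
          refine sum_insert_reindex j _ _ fun J hJ => ?_
          rw [hcc]
          simp only [if_neg hJ, if_pos (Finset.mem_insert_self j J), map_mul, phi_X_inr,
            Finset.erase_insert hJ]
          ring
        have keyB : ∑ J ∈ Finset.univ.filter (fun J => ¬ j ∈ J),
              phi (c J) * ymon J * X (Sum.inr j)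
            = ∑ I ∈ Finset.univ.filter (fun I => j ∈ I), phi (c (I.erase j)) * ymon I := by
          refine sum_insert_reindex j _ _ fun J hJ => ?_
          rw [Finset.erase_insert hJ]
          unfold ymon
          rw [Finset.prod_insert hJ]
          unfold yy; ring
        rw [key1, key2, keyA, keyB, Finset.sum_add_distrib, Finset.sum_add_distrib]
        ring

section Sigma2
variable (σ : SS F m ≃ₐ[F] SS F m)
  (hx : ∀ j : Fin m, σ (X (Sum.inl j)) = X (Sum.inl j))
  (hy : ∀ j : Fin m, σ (X (Sum.inr j)) = X (Sum.inr j) + X (Sum.inl j))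

include hx hy

lemma intertwine (c : Finset (Fin m) → SS F m) :
    σ (Psi c) - Psi c = Psi (DD c) := by
  unfold Psi
  rw [map_sum σ (fun J => phi (c J) * ymon J) Finset.univ, ← Finset.sum_sub_distrib]
  have step1 : ∀ J : Finset (Fin m),
      σ (phi (c J) * ymon J) - phi (c J) * ymon J
        = ∑ K ∈ J.powerset.erase ∅, phi (c J) * (xmon K * ymon (J \ K)) := by
    intro J
    rw [map_mul, sig_phi σ hx hy, sig_ymon σ hx hy]
    have hsplit : ∑ K ∈ J.powerset, xmon K * ymon (J \ K)
        = xmon ∅ * ymon (J \ ∅) + ∑ K ∈ J.powerset.erase ∅, xmon K * ymon (J \ K) :=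
      (Finset.add_sum_erase J.powerset (fun K => (xmon K * ymon (J \ K) : SS F m)) (Finset.empty_mem_powerset J)).symm
    rw [hsplit]
    have h0 : (xmon ∅ : SS F m) * ymon (J \ ∅) = ymon J := by
      unfold xmon; rw [Finset.prod_empty, Finset.sdiff_empty, one_mul]
    rw [h0, mul_add, Finset.mul_sum]
    ring
  rw [Finset.sum_congr rfl fun J _ => step1 J]
  have step2 : ∀ I : Finset (Fin m), phi (DD c I) * ymon I
      = ∑ J ∈ Finset.univ.filter (fun J => I ⊂ J),
          phi (c J) * (xmon (J \ I) * ymon I) := by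
    intro I
    unfold DD
    rw [map_sum phi (fun J => xmon (J \ I) * c J) (Finset.univ.filter (fun J => I ⊂ J)), Finset.sum_mul]
    refine Finset.sum_congr rfl fun J _ => ?_
    rw [map_mul, phi_xmon]
    ring
  rw [Finset.sum_congr rfl fun I _ => step2 I]
  rw [Finset.sum_sigma', Finset.sum_sigma']
  refine Finset.sum_nbij' (fun p => ⟨p.1 \ p.2, p.1⟩) (fun q => ⟨q.2, q.2 \ q.1⟩)
    ?_ ?_ ?_ ?_ ?_
  · rintro ⟨J, K⟩ hp
    simp only [Finset.mem_sigma, Finset.mem_univ, true_and, Finset.mem_erase,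
      Finset.mem_powerset, Finset.mem_filter] at hp ⊢
    exact Finset.sdiff_ssubset hp.2 (Finset.nonempty_iff_ne_empty.2 hp.1)
  · rintro ⟨I, J⟩ hq
    simp only [Finset.mem_sigma, Finset.mem_univ, true_and, Finset.mem_erase,
      Finset.mem_powerset, Finset.mem_filter] at hq ⊢
    constructor
    · intro h
      exact hq.not_subset (Finset.sdiff_eq_empty_iff_subset.mp h)
    · exact Finset.sdiff_subset
  · rintro ⟨J, K⟩ hp
    simp only [Finset.mem_sigma, Finset.mem_univ, true_and, Finset.mem_erase,
      Finset.mem_powerset] at hp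
    exact congrArg (Sigma.mk J) (Finset.sdiff_sdiff_eq_self hp.2)
  · rintro ⟨I, J⟩ hq
    simp only [Finset.mem_sigma, Finset.mem_univ, true_and, Finset.mem_filter] at hq
    have h1 : J \ (J \ I) = I := Finset.sdiff_sdiff_eq_self hq.subset
    show (⟨J \ (J \ I), J⟩ : (_ : Finset (Fin m)) × Finset (Fin m)) = ⟨I, J⟩
    rw [h1]
  · rintro ⟨J, K⟩ hp
    simp only [Finset.mem_sigma, Finset.mem_univ, true_and, Finset.mem_erase,
      Finset.mem_powerset] at hp
    rw [Finset.sdiff_sdiff_eq_self hp.2]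

end Sigma2

def W (s : (Fin m ⊕ Fin m) →₀ ℕ) : ℕ := ∑ i : Fin m, s (Sum.inr i)

lemma W_add (s t : (Fin m ⊕ Fin m) →₀ ℕ) : W (s + t) = W s + W t := by
  unfold W
  rw [← Finset.sum_add_distrib]
  refine Finset.sum_congr rfl fun i _ => ?_
  simp

lemma W_single_inl (j : Fin m) (k : ℕ) : W (Finsupp.single (Sum.inl j) k) = 0 := by
  unfold W
  refine Finset.sum_eq_zero fun i _ => ?_
  rw [Finsupp.single_apply, if_neg (by simp)]

lemma W_single_inr (j : Fin m) (k : ℕ) : W (Finsupp.single (Sum.inr j) k) = k := by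
  unfold W
  rw [Finset.sum_eq_single j]
  · rw [Finsupp.single_apply, if_pos rfl]
  · intro i _ hne
    rw [Finsupp.single_apply, if_neg (by simp [hne.symm])]
  · simp

def Top (f : SS F m) (u : (Fin m ⊕ Fin m) →₀ ℕ) : Prop :=
  ∃ r, f = monomial u 1 + r ∧ ∀ s ∈ r.support, W s < W u

lemma Top_mul {f g : SS F m} {u v : (Fin m ⊕ Fin m) →₀ ℕ}
    (hf : Top f u) (hg : Top g v) : Top (f * g) (u + v) := by
  obtain ⟨r, hfr, hr⟩ := hf
  obtain ⟨r', hgr, hr'⟩ := hg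
  refine ⟨monomial u 1 * r' + r * monomial v 1 + r * r', ?_, ?_⟩
  · rw [hfr, hgr]
    have hmm : (monomial (u + v) (1:F)) = monomial u (1:F) * monomial v 1 := by
      rw [monomial_mul, one_mul]
    rw [hmm]; ring
  · intro s hs
    rw [W_add]
    have hsub := Finset.mem_of_subset (MvPolynomial.support_add) hs
    rcases Finset.mem_union.1 hsub with hs1 | hs1
    · have hsub2 := Finset.mem_of_subset (MvPolynomial.support_add) hs1
      rcases Finset.mem_union.1 hsub2 with hs2 | hs2
      · -- monomial u 1 * r'
        have := MvPolynomial.support_mul _ _ hs2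
        rw [Finset.mem_add] at this
        obtain ⟨a, ha, b, hb, rfl⟩ := this
        have ha' : a = u := by
          have := MvPolynomial.support_monomial_subset ha
          simpa using this
        subst ha'
        rw [W_add]
        exact Nat.add_lt_add_left (hr' b hb) _
      · have := MvPolynomial.support_mul _ _ hs2
        rw [Finset.mem_add] at this
        obtain ⟨a, ha, b, hb, rfl⟩ := this
        have hb' : b = v := by
          have := MvPolynomial.support_monomial_subset hb
          simpa using this
        subst hb'
        rw [W_add]
        exact Nat.add_lt_add_right (hr a ha) _
    · have := MvPolynomial.support_mul _ _ hs1
      rw [Finset.mem_add] at this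
      obtain ⟨a, ha, b, hb, rfl⟩ := this
      rw [W_add]
      exact Nat.add_lt_add (hr a ha) (hr' b hb)

lemma Top_monomial (u : (Fin m ⊕ Fin m) →₀ ℕ) : Top (monomial u 1 : SS F m) u :=
  ⟨0, by simp, by simp⟩

lemma Top_one : Top (1 : SS F m) 0 := by
  have := Top_monomial (F := F) (m := m) 0
  rwa [monomial_zero', map_one] at this

lemma Top_pow {f : SS F m} {u} (hf : Top f u) (e : ℕ) : Top (f ^ e) (e • u) := by
  induction e with
  | zero => simpa using Top_one
  | succ e ih =>
      rw [pow_succ, succ_nsmul]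
      exact Top_mul ih hf

lemma Top_prod {ι : Type*} (t : Finset ι) (f : ι → SS F m) (u : ι → ((Fin m ⊕ Fin m) →₀ ℕ))
    (h : ∀ i ∈ t, Top (f i) (u i)) : Top (∏ i ∈ t, f i) (∑ i ∈ t, u i) := by
  induction t using Finset.cons_induction with
  | empty => simpa using Top_one
  | cons a t ha ih =>
      rw [Finset.prod_cons, Finset.sum_cons]
      exact Top_mul (h a (Finset.mem_cons_self a t)) (ih fun i hi => h i (Finset.mem_cons_of_mem hi))

noncomputable def tops : Fin m ⊕ Fin m → ((Fin m ⊕ Fin m) →₀ ℕ) :=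
  Sum.elim (fun j => Finsupp.single (Sum.inl j) 1) (fun j => Finsupp.single (Sum.inr j) 2)

lemma Top_phiX_pow (v : Fin m ⊕ Fin m) (e : ℕ) :
    Top ((phi (X v) : SS F m) ^ e) (e • tops v) := by
  obtain (j | j) := v
  · rw [phi_X_inl]
    have : (xx j : SS F m) = monomial (tops (Sum.inl j)) 1 := by
      unfold xx tops
      simp [X, Sum.elim_inl]
    rw [this]
    exact Top_pow (Top_monomial _) e
  · rw [phi_X_inr]
    have hn : Top (nn j : SS F m) (tops (Sum.inr j)) := by
      refine ⟨xx j * yy j, ?_, ?_⟩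
      · unfold nn tops
        rw [Sum.elim_inr]
        congr 1
        unfold yy
        rw [X_pow_eq_monomial]
      · intro s hs
        have hxy : (xx j : SS F m) * yy j
            = monomial (Finsupp.single (Sum.inl j) 1 + Finsupp.single (Sum.inr j) 1) 1 := by
          unfold xx yy
          rw [X, X, monomial_mul, one_mul]
        rw [hxy] at hs
        have := MvPolynomial.support_monomial_subset hs
        simp only [Finset.mem_singleton] at this
        subst this
        rw [W_add, W_single_inl, W_single_inr]
        unfold tops
        rw [Sum.elim_inr, W_single_inr]
        omega
    exact Top_pow hn e

noncomputable def texp (s : (Fin m ⊕ Fin m) →₀ ℕ) (J : Finset (Fin m)) :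
    (Fin m ⊕ Fin m) →₀ ℕ :=
  (∑ v ∈ s.support, s v • tops v) + ∑ j ∈ J, Finsupp.single (Sum.inr j) 1

lemma Top_key (s : (Fin m ⊕ Fin m) →₀ ℕ) (J : Finset (Fin m)) :
    Top ((phi (monomial s 1) : SS F m) * ymon J) (texp s J) := by
  refine Top_mul ?_ ?_
  · have hmon : (monomial s 1 : SS F m) = ∏ v ∈ s.support, X v ^ s v := by
      rw [monomial_eq, C_1, one_mul, Finsupp.prod]
    rw [hmon, map_prod]
    refine Top_prod _ _ _ fun v _ => ?_
    rw [map_pow]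
    exact Top_phiX_pow v (s v)
  · unfold ymon
    refine Top_prod _ _ _ fun j _ => ?_
    have : (yy j : SS F m) = monomial (Finsupp.single (Sum.inr j) 1) 1 := by
      unfold yy; rw [X]
    rw [this]
    exact Top_monomial _

lemma texp_apply_inl (s : (Fin m ⊕ Fin m) →₀ ℕ) (J : Finset (Fin m)) (i : Fin m) :
    (texp s J) (Sum.inl i) = s (Sum.inl i) := by
  unfold texp
  rw [Finsupp.add_apply, Finset.sum_apply', Finset.sum_apply']
  have h2 : ∑ j ∈ J, (Finsupp.single (Sum.inr j) (1:ℕ)) (Sum.inl i) = 0 :=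
    Finset.sum_eq_zero fun j _ => by rw [Finsupp.single_apply, if_neg (by simp)]
  rw [h2, add_zero]
  rw [Finset.sum_eq_single (Sum.inl i)]
  · rw [Finsupp.smul_apply]
    unfold tops
    rw [Sum.elim_inl, Finsupp.single_apply, if_pos rfl]
    simp
  · intro v _ hv
    rw [Finsupp.smul_apply]
    obtain (j | j) := v
    · unfold tops
      rw [Sum.elim_inl, Finsupp.single_apply, if_neg (by simpa using fun h => hv (by rw [h]))]
      simp
    · unfold tops
      rw [Sum.elim_inr, Finsupp.single_apply, if_neg (by simp)]
      simp
  · intro hnotmem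
    rw [Finsupp.notMem_support_iff.1 hnotmem]
    simp

lemma texp_apply_inr (s : (Fin m ⊕ Fin m) →₀ ℕ) (J : Finset (Fin m)) (i : Fin m) :
    (texp s J) (Sum.inr i) = 2 * s (Sum.inr i) + (if i ∈ J then 1 else 0) := by
  unfold texp
  rw [Finsupp.add_apply, Finset.sum_apply', Finset.sum_apply']
  have h2 : ∑ j ∈ J, (Finsupp.single (Sum.inr j : Fin m ⊕ Fin m) (1:ℕ)) (Sum.inr i)
      = if i ∈ J then 1 else 0 := by
    have : ∀ j ∈ J, (Finsupp.single (Sum.inr j : Fin m ⊕ Fin m) (1:ℕ)) (Sum.inr i)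
        = if j = i then 1 else 0 := by
      intro j _
      rw [Finsupp.single_apply]
      simp [Sum.inr.injEq]
    rw [Finset.sum_congr rfl this, Finset.sum_ite_eq' J i (fun _ => 1)]
  rw [h2]
  congr 1
  rw [Finset.sum_eq_single (Sum.inr i)]
  · rw [Finsupp.smul_apply]
    unfold tops
    rw [Sum.elim_inr, Finsupp.single_apply, if_pos rfl]
    simp [mul_comm]
  · intro v _ hv
    rw [Finsupp.smul_apply]
    obtain (j | j) := v
    · unfold tops
      rw [Sum.elim_inl, Finsupp.single_apply, if_neg (by simp)]
      simp
    · unfold tops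
      rw [Sum.elim_inr, Finsupp.single_apply, if_neg (by simpa using fun h => hv (by rw [h]))]
      simp
  · intro hnotmem
    rw [Finsupp.notMem_support_iff.1 hnotmem]
    simp

lemma texp_inj {s s' : (Fin m ⊕ Fin m) →₀ ℕ} {J J' : Finset (Fin m)}
    (h : texp s J = texp s' J') : s = s' ∧ J = J' := by
  have hJ : J = J' := by
    ext i
    have := congrArg (fun f => f (Sum.inr i)) h
    simp only [texp_apply_inr] at this
    by_cases h1 : i ∈ J <;> by_cases h2 : i ∈ J' <;>
      simp only [h1, h2, if_true, if_false, if_pos, if_neg] at this ⊢ <;> omega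
  refine ⟨?_, hJ⟩
  subst hJ
  ext v
  obtain (i | i) := v
  · have := congrArg (fun f => f (Sum.inl i)) h
    simpa only [texp_apply_inl] using this
  · have := congrArg (fun f => f (Sum.inr i)) h
    simp only [texp_apply_inr] at this
    omega

lemma coeff_top (s : (Fin m ⊕ Fin m) →₀ ℕ) (J : Finset (Fin m))
    (μ : (Fin m ⊕ Fin m) →₀ ℕ) (hW : W (texp s J) ≤ W μ) :
    coeff μ (phi (monomial s 1) * ymon J : SS F m)
      = if texp s J = μ then 1 else 0 := by
  obtain ⟨r, heq, hr⟩ := Top_key (F := F) s J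
  rw [heq, coeff_add, coeff_monomial]
  have hr0 : coeff μ r = 0 := by
    by_contra hc
    exact absurd (lt_of_lt_of_le (hr μ (mem_support_iff.2 hc)) hW) (lt_irrefl _)
  rw [hr0, add_zero]

lemma Psi_expand (c : Finset (Fin m) → SS F m) (μ : (Fin m ⊕ Fin m) →₀ ℕ) :
    coeff μ (Psi c) = ∑ J : Finset (Fin m), ∑ s ∈ (c J).support,
      coeff s (c J) * coeff μ (phi (monomial s 1) * ymon J) := by
  unfold Psi
  rw [MvPolynomial.coeff_sum]
  refine Finset.sum_congr rfl fun J _ => ?_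
  conv_lhs => rw [(c J).as_sum]
  rw [map_sum, Finset.sum_mul, MvPolynomial.coeff_sum]
  refine Finset.sum_congr rfl fun s hs => ?_
  have : (monomial s) (coeff s (c J)) = C (coeff s (c J)) * monomial s 1 := by
    rw [C_mul_monomial, mul_one]
  rw [this, map_mul]
  have hC : phi (C (coeff s (c J)) : SS F m) = C (coeff s (c J)) := by
    unfold phi
    rw [← MvPolynomial.algebraMap_eq, AlgHom.commutes, MvPolynomial.algebraMap_eq]
  rw [hC, mul_assoc, coeff_C_mul]

lemma Psi_inj (c : Finset (Fin m) → SS F m) (h : Psi c = 0) : ∀ J, c J = 0 := by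
  by_contra hne
  push_neg at hne
  obtain ⟨J₀, hJ₀⟩ := hne
  set 𝒮 : Finset (Σ _ : Finset (Fin m), (Fin m ⊕ Fin m) →₀ ℕ) :=
    Finset.univ.sigma (fun J => (c J).support) with h𝒮
  have hne𝒮 : 𝒮.Nonempty := by
    obtain ⟨s, hs⟩ := (MvPolynomial.support_nonempty.2 hJ₀)
    exact ⟨⟨J₀, s⟩, by simp [h𝒮, hs]⟩
  obtain ⟨p₀, hp₀mem, hp₀max⟩ :=
    Finset.exists_max_image 𝒮 (fun p => W (texp p.2 p.1)) hne𝒮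
  have hcoeff : coeff (texp p₀.2 p₀.1) (Psi c) = coeff p₀.2 (c p₀.1) := by
    rw [Psi_expand, Finset.sum_sigma']
    rw [Finset.sum_eq_single_of_mem p₀ hp₀mem]
    · rw [coeff_top _ _ _ (le_refl _), if_pos rfl, mul_one]
    · rintro ⟨J, s⟩ hmem hnep
      rw [coeff_top _ _ _ (hp₀max _ hmem)]
      rw [if_neg, mul_zero]
      intro heq
      obtain ⟨hs, hJ⟩ := texp_inj heq
      exact hnep (by subst hs; subst hJ; rfl)
  rw [h] at hcoeff
  simp only [coeff_zero] at hcoeff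
  have : p₀.2 ∈ (c p₀.1).support := by
    simp only [h𝒮, Finset.mem_sigma, Finset.mem_univ, true_and] at hp₀mem
    exact hp₀mem
  rw [mem_support_iff] at this
  exact this hcoeff.symm

noncomputable def lam (t : Fin m) (k : ℕ) (f : SS F m) : SS F m :=
  ∑ s ∈ f.support,
    if s (Sum.inl t) = k then monomial (s - Finsupp.single (Sum.inl t) k) (coeff s f) else 0

lemma lam_coeff (t : Fin m) (k : ℕ) (f : SS F m) (μ : (Fin m ⊕ Fin m) →₀ ℕ) :
    coeff μ (lam t k f)
      = if μ (Sum.inl t) = 0 then coeff (μ + Finsupp.single (Sum.inl t) k) f else 0 := by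
  unfold lam
  rw [MvPolynomial.coeff_sum]
  simp only [apply_ite (coeff μ), coeff_zero]
  by_cases hμ : μ (Sum.inl t) = 0
  · rw [if_pos hμ]
    rw [Finset.sum_eq_single (μ + Finsupp.single (Sum.inl t) k)]
    · have h1 : (μ + Finsupp.single (Sum.inl t) k : (Fin m ⊕ Fin m) →₀ ℕ) (Sum.inl t) = k := by
        rw [Finsupp.add_apply, Finsupp.single_apply, if_pos rfl, hμ, zero_add]
      rw [if_pos h1]
      have h2 : μ + Finsupp.single (Sum.inl t) k - Finsupp.single (Sum.inl t) k = μ := by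
        ext v
        rw [Finsupp.tsub_apply, Finsupp.add_apply]
        omega
      rw [h2, coeff_monomial, if_pos rfl]
    · intro s _ hne
      by_cases h1 : s (Sum.inl t) = k
      · rw [if_pos h1, coeff_monomial, if_neg]
        intro heq
        apply hne
        ext v
        have h2 := congrArg (fun g => g v) heq
        simp only [Finsupp.tsub_apply] at h2
        rw [Finsupp.add_apply]
        by_cases hv : v = Sum.inl t
        · subst hv
          rw [Finsupp.single_apply, if_pos rfl]
          rw [Finsupp.single_apply, if_pos rfl] at h2
          omega
        · rw [Finsupp.single_apply, if_neg (fun h => hv h.symm), add_zero]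
          rw [Finsupp.single_apply, if_neg (fun h => hv h.symm)] at h2
          omega
      · rw [if_neg h1]
    · intro hnot
      rw [MvPolynomial.notMem_support_iff.1 hnot]
      simp
  · rw [if_neg hμ]
    refine Finset.sum_eq_zero fun s _ => ?_
    by_cases h1 : s (Sum.inl t) = k
    · rw [if_pos h1, coeff_monomial, if_neg]
      intro heq
      apply hμ
      have h2 := congrArg (fun g => g (Sum.inl t)) heq
      simp only [Finsupp.tsub_apply] at h2
      rw [Finsupp.single_apply, if_pos rfl] at h2
      omega
    · rw [if_neg h1]

lemma lam_add (t : Fin m) (k : ℕ) (f g : SS F m) :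
    lam t k (f + g) = lam t k f + lam t k g := by
  ext μ
  rw [coeff_add, lam_coeff, lam_coeff, lam_coeff]
  by_cases hμ : μ (Sum.inl t) = 0
  · rw [if_pos hμ, if_pos hμ, if_pos hμ, coeff_add]
  · rw [if_neg hμ, if_neg hμ, if_neg hμ, add_zero]

lemma lam_shift (t : Fin m) (k : ℕ) (f : SS F m) :
    lam t (k + 1) (X (Sum.inl t) * f) = lam t k f := by
  ext μ
  rw [lam_coeff, lam_coeff]
  by_cases hμ : μ (Sum.inl t) = 0
  · rw [if_pos hμ, if_pos hμ]
    have h1 : μ + Finsupp.single (Sum.inl t) (k + 1)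
        = Finsupp.single (Sum.inl t) 1 + (μ + Finsupp.single (Sum.inl t) k) := by
      rw [Finsupp.single_add]
      abel
    rw [h1]
    exact MvPolynomial.coeff_X_mul _ _ _
  · rw [if_neg hμ, if_neg hμ]

lemma lam_zero_shift (t : Fin m) (f : SS F m) :
    lam t 0 (X (Sum.inl t) * f) = 0 := by
  ext μ
  rw [lam_coeff, coeff_zero]
  by_cases hμ : μ (Sum.inl t) = 0
  · rw [if_pos hμ, Finsupp.single_zero, add_zero]
    rw [MvPolynomial.coeff_X_mul']
    rw [if_neg]
    simp [Finsupp.mem_support_iff, hμ]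
  · rw [if_neg hμ]

lemma lam_X_mul (t j : Fin m) (hj : j ≠ t) (k : ℕ) (f : SS F m) :
    lam t k (X (Sum.inl j) * f) = X (Sum.inl j) * lam t k f := by
  ext μ
  rw [lam_coeff, MvPolynomial.coeff_X_mul', MvPolynomial.coeff_X_mul']
  by_cases hμ : μ (Sum.inl t) = 0
  · rw [if_pos hμ]
    have hmem : Sum.inl j ∈ (μ + Finsupp.single (Sum.inl t) k).support ↔
        Sum.inl j ∈ μ.support := by
      simp only [Finsupp.mem_support_iff, Finsupp.add_apply, Finsupp.single_apply]
      rw [if_neg (by simp [hj.symm])]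
      simp
    by_cases hm : Sum.inl j ∈ μ.support
    · rw [if_pos (hmem.2 hm), if_pos hm, lam_coeff]
      have hμ2 : (μ - Finsupp.single (Sum.inl j) 1 : (Fin m ⊕ Fin m) →₀ ℕ) (Sum.inl t) = 0 := by
        rw [Finsupp.tsub_apply, Finsupp.single_apply, if_neg (by simp [hj]), hμ]
        omega
      rw [if_pos hμ2]

      congr 1
      ext v
      simp only [Finsupp.tsub_apply, Finsupp.add_apply, Finsupp.single_apply]
      by_cases hv : (Sum.inl t : Fin m ⊕ Fin m) = v
      · have hne : ¬((Sum.inl j : Fin m ⊕ Fin m) = v) := by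
          rw [← hv]
          simp [hj]
        simp only [if_pos hv, if_neg hne]
        omega
      · simp only [if_neg hv]
        by_cases hw : (Sum.inl j : Fin m ⊕ Fin m) = v
        · simp only [if_pos hw]; omega
        · simp only [if_neg hw]; omega
    · rw [if_neg (fun hh => hm (hmem.1 hh)), if_neg hm]
  · rw [if_neg hμ]
    by_cases hm : Sum.inl j ∈ μ.support
    · rw [if_pos hm, lam_coeff, if_neg]
      rw [Finsupp.tsub_apply, Finsupp.single_apply, if_neg (by simp [hj]), Nat.sub_zero]
      exact hμ
    · rw [if_neg hm]

lemma lam_reconstruct (t : Fin m) (f : SS F m) (N : ℕ) (hN : degreeOf (Sum.inl t) f ≤ N) :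
    f = ∑ k ∈ Finset.range (N + 1), X (Sum.inl t) ^ k * lam t k f := by
  ext μ
  rw [MvPolynomial.coeff_sum]
  have hterm : ∀ k, coeff μ ((X (Sum.inl t) : SS F m) ^ k * lam t k f)
      = if Finsupp.single (Sum.inl t) k ≤ μ then coeff (μ - Finsupp.single (Sum.inl t) k) (lam t k f) else 0 := by
    intro k
    rw [X_pow_eq_monomial, MvPolynomial.coeff_monomial_mul', one_mul]
  rw [Finset.sum_congr rfl fun k _ => hterm k]
  rw [Finset.sum_eq_single (μ (Sum.inl t))]
  · rw [if_pos (Finsupp.single_le_iff.2 (le_refl _)), lam_coeff]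
    have h1 : (μ - Finsupp.single (Sum.inl t) (μ (Sum.inl t)) : (Fin m ⊕ Fin m) →₀ ℕ) (Sum.inl t) = 0 := by
      rw [Finsupp.tsub_apply, Finsupp.single_apply, if_pos rfl]
      omega
    rw [if_pos h1]
    congr 1
    ext v
    simp only [Finsupp.add_apply, Finsupp.tsub_apply, Finsupp.single_apply]
    by_cases hv : (Sum.inl t : Fin m ⊕ Fin m) = v
    · subst hv; simp
    · simp [hv]
  · intro k _ hk
    by_cases hle : Finsupp.single (Sum.inl t) k ≤ μ
    · rw [if_pos hle, lam_coeff]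
      rw [if_neg, ]
      have := Finsupp.single_le_iff.1 hle
      rw [Finsupp.tsub_apply, Finsupp.single_apply, if_pos rfl]
      omega
    · rw [if_neg hle]
  · intro hnot
    rw [Finset.mem_range, not_lt] at hnot
    have hz : coeff μ f = 0 := by
      by_contra hc
      have hmem : μ ∈ f.support := mem_support_iff.2 hc
      have := (MvPolynomial.degreeOf_le_iff.1 hN) μ hmem
      omega
    rw [if_pos (Finsupp.single_le_iff.2 (le_refl _)), lam_coeff]
    have h1 : (μ - Finsupp.single (Sum.inl t) (μ (Sum.inl t)) : (Fin m ⊕ Fin m) →₀ ℕ) (Sum.inl t) = 0 := by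
      rw [Finsupp.tsub_apply, Finsupp.single_apply, if_pos rfl]; omega
    rw [if_pos h1]
    have h2 : μ - Finsupp.single (Sum.inl t) (μ (Sum.inl t))
        + Finsupp.single (Sum.inl t) (μ (Sum.inl t)) = μ := by
      ext v
      simp only [Finsupp.add_apply, Finsupp.tsub_apply, Finsupp.single_apply]
      by_cases hv : (Sum.inl t : Fin m ⊕ Fin m) = v
      · subst hv; simp
      · simp [hv]
    rw [h2, hz]

lemma DD_zero (I : Finset (Fin m)) : DD (fun _ => (0 : SS F m)) I = 0 := by
  unfold DD
  exact Finset.sum_eq_zero fun J _ => mul_zero _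

lemma DD_add (c d : Finset (Fin m) → SS F m) (I : Finset (Fin m)) :
    DD (fun J => c J + d J) I = DD c I + DD d I := by
  unfold DD
  rw [← Finset.sum_add_distrib]
  exact Finset.sum_congr rfl fun J _ => by ring

lemma DD_mul_left (g : SS F m) (c : Finset (Fin m) → SS F m) (I : Finset (Fin m)) :
    DD (fun J => g * c J) I = g * DD c I := by
  unfold DD
  rw [Finset.mul_sum]
  exact Finset.sum_congr rfl fun J _ => by ring

lemma DD_supp (T : Finset (Fin m)) (c : Finset (Fin m) → SS F m)
    (hsupp : ∀ J, ¬ J ⊆ T → c J = 0) (I : Finset (Fin m)) (hI : ¬ I ⊆ T) :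
    DD c I = 0 := by
  unfold DD
  refine Finset.sum_eq_zero fun J hJ => ?_
  simp only [Finset.mem_filter, Finset.mem_univ, true_and] at hJ
  rw [hsupp J (fun hsub => hI (hJ.subset.trans hsub)), mul_zero]

noncomputable def czero (t : Fin m) (c : Finset (Fin m) → SS F m) : Finset (Fin m) → SS F m :=
  fun J => if t ∈ J then 0 else c J

noncomputable def cone (t : Fin m) (c : Finset (Fin m) → SS F m) : Finset (Fin m) → SS F m :=
  fun J => if t ∈ J then 0 else c (insert t J)

lemma sum_filter_restrict (p q : Finset (Fin m) → Prop) [DecidablePred p] [DecidablePred q]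
    (f : Finset (Fin m) → SS F m) (h : ∀ J, p J → ¬ q J → f J = 0) :
    ∑ J ∈ Finset.univ.filter p, f J
      = ∑ J ∈ Finset.univ.filter (fun J => p J ∧ q J), f J := by
  rw [← Finset.sum_filter_add_sum_filter_not (Finset.univ.filter p) q f,
    Finset.filter_filter, Finset.filter_filter]
  have hz : ∑ J ∈ Finset.univ.filter (fun J => p J ∧ ¬ q J), f J = 0 := by
    refine Finset.sum_eq_zero fun J hJ => ?_
    simp only [Finset.mem_filter, Finset.mem_univ, true_and] at hJ
    exact h J hJ.1 hJ.2
  rw [hz, add_zero]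

lemma erase_ssubset_erase_of {t : Fin m} {I J : Finset (Fin m)} (ht : t ∈ I) (h : I ⊂ J) :
    I.erase t ⊂ J.erase t := by
  obtain ⟨a, haJ, haI⟩ := Finset.exists_of_ssubset h
  refine (Finset.ssubset_iff_of_subset (Finset.erase_subset_erase t h.subset)).2 ?_
  exact ⟨a, Finset.mem_erase.2 ⟨fun h' => haI (h' ▸ ht), haJ⟩,
    fun h' => haI (Finset.mem_of_mem_erase h')⟩

lemma B2 (t : Fin m) (c : Finset (Fin m) → SS F m) (I : Finset (Fin m)) (ht : t ∈ I) :
    DD c I = DD (cone t c) (I.erase t) := by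
  unfold DD
  rw [sum_filter_restrict (fun J => I.erase t ⊂ J) (fun J => t ∉ J)
    (fun J => xmon (J \ I.erase t) * cone t c J)
    (fun J _ hq => by
      simp only [not_not] at hq
      simp [cone, hq])]
  refine Finset.sum_nbij' (fun J => J.erase t) (fun J' => insert t J') ?_ ?_ ?_ ?_ ?_
  · intro J hJ
    simp only [Finset.mem_filter, Finset.mem_univ, true_and] at hJ ⊢
    exact ⟨erase_ssubset_erase_of ht hJ, Finset.notMem_erase t J⟩
  · intro J' hJ'
    simp only [Finset.mem_filter, Finset.mem_univ, true_and] at hJ' ⊢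
    obtain ⟨hsub, hnt⟩ := hJ'
    constructor
    · intro a ha
      by_cases hat : a = t
      · subst hat; exact Finset.mem_insert_self a J'
      · exact Finset.mem_insert_of_mem (hsub.subset (Finset.mem_erase.2 ⟨hat, ha⟩))
    · intro hsub2
      obtain ⟨a, haJ', haI⟩ := Finset.exists_of_ssubset hsub
      have hat : a ≠ t := fun h => hnt (h ▸ haJ')
      exact haI (Finset.mem_erase.2 ⟨hat, hsub2 (Finset.mem_insert_of_mem haJ')⟩)
  · intro J hJ
    simp only [Finset.mem_filter, Finset.mem_univ, true_and] at hJ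
    have htJ : t ∈ J := hJ.subset ht
    exact Finset.insert_erase htJ
  · intro J' hJ'
    simp only [Finset.mem_filter, Finset.mem_univ, true_and] at hJ'
    exact Finset.erase_insert hJ'.2
  · intro J hJ
    simp only [Finset.mem_filter, Finset.mem_univ, true_and] at hJ
    have htJ : t ∈ J := hJ.subset ht
    have hset : J \ I = J.erase t \ I.erase t := by
      ext a
      simp only [Finset.mem_sdiff, Finset.mem_erase]
      by_cases hat : a = t
      · subst hat; simp [ht, htJ]
      · simp [hat]
    have hc : cone t c (J.erase t) = c J := by
      unfold cone
      rw [if_neg (Finset.notMem_erase t J), Finset.insert_erase htJ]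
    rw [hset, hc]

lemma subset_insert_iff_of_not_mem {t : Fin m} {J T : Finset (Fin m)} (ht : t ∉ J) :
    J ⊆ insert t T ↔ J ⊆ T := by
  constructor
  · intro h a ha
    rcases Finset.mem_insert.1 (h ha) with h' | h'
    · exact absurd (h' ▸ ha) ht
    · exact h'
  · intro h
    exact h.trans (Finset.subset_insert t T)

lemma B1 (t : Fin m) (c : Finset (Fin m) → SS F m) (I : Finset (Fin m)) (ht : t ∉ I) :
    DD c I = DD (czero t c) I
      + X (Sum.inl t) * (cone t c I + DD (cone t c) I) := by
  have hzero : DD (czero t c) I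
      = ∑ J ∈ Finset.univ.filter (fun J => I ⊂ J ∧ t ∉ J), xmon (J \ I) * c J := by
    unfold DD
    rw [sum_filter_restrict (fun J => I ⊂ J) (fun J => t ∉ J)
      (fun J => xmon (J \ I) * czero t c J)
      (fun J _ hq => by
        simp only [not_not] at hq
        simp [czero, hq])]
    refine Finset.sum_congr rfl fun J hJ => ?_
    simp only [Finset.mem_filter, Finset.mem_univ, true_and] at hJ
    unfold czero
    rw [if_neg hJ.2]
  have hsplit : DD c I
      = (∑ J ∈ Finset.univ.filter (fun J => I ⊂ J ∧ t ∉ J), xmon (J \ I) * c J)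
        + ∑ J ∈ Finset.univ.filter (fun J => I ⊂ J ∧ t ∈ J), xmon (J \ I) * c J := by
    unfold DD
    rw [← Finset.sum_filter_add_sum_filter_not (Finset.univ.filter (fun J => I ⊂ J))
      (fun J => t ∉ J), Finset.filter_filter, Finset.filter_filter]
    congr 2
    ext J
    simp [not_not]
  have hone : DD (cone t c) I
      = ∑ J' ∈ Finset.univ.filter (fun J' => I ⊂ J' ∧ t ∉ J'), xmon (J' \ I) * c (insert t J') := by
    unfold DD
    rw [sum_filter_restrict (fun J => I ⊂ J) (fun J => t ∉ J)
      (fun J => xmon (J \ I) * cone t c J)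
      (fun J _ hq => by
        simp only [not_not] at hq
        simp [cone, hq])]
    refine Finset.sum_congr rfl fun J hJ => ?_
    simp only [Finset.mem_filter, Finset.mem_univ, true_and] at hJ
    unfold cone
    rw [if_neg hJ.2]
  have hmerge : cone t c I + DD (cone t c) I
      = ∑ J' ∈ Finset.univ.filter (fun J' => I ⊆ J' ∧ t ∉ J'), xmon (J' \ I) * c (insert t J') := by
    rw [hone]
    have hsetsplit : Finset.univ.filter (fun J' : Finset (Fin m) => I ⊆ J' ∧ t ∉ J')
        = insert I (Finset.univ.filter (fun J' => I ⊂ J' ∧ t ∉ J')) := by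
      ext J'
      simp only [Finset.mem_filter, Finset.mem_univ, true_and, Finset.mem_insert]
      constructor
      · rintro ⟨hsub, hnt⟩
        by_cases hJI : J' = I
        · exact Or.inl hJI
        · exact Or.inr ⟨lt_of_le_of_ne hsub (fun h => hJI h.symm), hnt⟩
      · rintro (rfl | ⟨hss, hnt⟩)
        · exact ⟨le_refl _, ht⟩
        · exact ⟨hss.subset, hnt⟩
    rw [hsetsplit, Finset.sum_insert (by
      simp only [Finset.mem_filter, Finset.mem_univ, true_and]
      exact fun h => h.1.ne rfl)]
    congr 1
    rw [Finset.sdiff_self]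
    unfold xmon cone
    rw [Finset.prod_empty, one_mul, if_neg ht]
  rw [hsplit, hzero, hmerge, Finset.mul_sum]
  congr 1
  refine Finset.sum_nbij' (fun J => J.erase t) (fun J' => insert t J') ?_ ?_ ?_ ?_ ?_
  · intro J hJ
    simp only [Finset.mem_filter, Finset.mem_univ, true_and] at hJ ⊢
    obtain ⟨hss, htJ⟩ := hJ
    constructor
    · intro a ha
      exact Finset.mem_erase.2 ⟨fun h => ht (h ▸ ha), hss.subset ha⟩
    · exact Finset.notMem_erase t J
  · intro J' hJ'
    simp only [Finset.mem_filter, Finset.mem_univ, true_and] at hJ' ⊢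
    obtain ⟨hsub, hnt⟩ := hJ'
    refine ⟨?_, Finset.mem_insert_self t J'⟩
    refine (Finset.ssubset_iff_of_subset (hsub.trans (Finset.subset_insert t J'))).2 ?_
    exact ⟨t, Finset.mem_insert_self t J', ht⟩
  · intro J hJ
    simp only [Finset.mem_filter, Finset.mem_univ, true_and] at hJ
    exact Finset.insert_erase hJ.2
  · intro J' hJ'
    simp only [Finset.mem_filter, Finset.mem_univ, true_and] at hJ'
    exact Finset.erase_insert hJ'.2
  · intro J hJ
    simp only [Finset.mem_filter, Finset.mem_univ, true_and] at hJ
    obtain ⟨hss, htJ⟩ := hJ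
    have hins : insert t (J.erase t) = J := Finset.insert_erase htJ
    rw [hins]
    have hset : J \ I = insert t (J.erase t \ I) := by
      ext a
      simp only [Finset.mem_sdiff, Finset.mem_erase, Finset.mem_insert]
      by_cases hat : a = t
      · subst hat; simp [htJ, ht]
      · simp [hat]
    rw [hset]
    unfold xmon
    rw [Finset.prod_insert (by simp)]
    unfold xx
    ring

lemma char2_eq_of_add_eq_zero {x y : SS F m} (h : x + y = 0) : x = y := by
  linear_combination h - y * (two_zero : (2 : SS F m) = 0)

lemma lam_zero (t : Fin m) (k : ℕ) : lam t k (0 : SS F m) = 0 := by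
  ext μ
  rw [lam_coeff, coeff_zero]
  split_ifs <;> simp

lemma lam_sum {ι : Type*} (t : Fin m) (k : ℕ) (s : Finset ι) (f : ι → SS F m) :
    lam t k (∑ i ∈ s, f i) = ∑ i ∈ s, lam t k (f i) := by
  induction s using Finset.cons_induction with
  | empty => simpa using lam_zero t k
  | cons a s ha ih =>
      rw [Finset.sum_cons, Finset.sum_cons, lam_add, ih]

lemma lam_xmon_mul (t : Fin m) (k : ℕ) (K : Finset (Fin m)) (ht : t ∉ K) (f : SS F m) :
    lam t k (xmon K * f) = xmon K * lam t k f := by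
  induction K using Finset.cons_induction with
  | empty =>
      unfold xmon
      rw [Finset.prod_empty, one_mul, one_mul]
  | cons a K ha ih =>
      have hat : a ≠ t := fun h => ht (h ▸ Finset.mem_cons_self a K)
      have htK : t ∉ K := fun h => ht (Finset.mem_cons_of_mem h)
      have hx : (xmon (Finset.cons a K ha) : SS F m) = X (Sum.inl a) * xmon K := by
        unfold xmon
        rw [Finset.prod_cons]
        rfl
      rw [hx, mul_assoc, lam_X_mul t a hat, ih htK, mul_assoc]

lemma saturation (T : Finset (Fin m)) (t : Fin m) (ht : t ∉ T) (β : SS F m)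
    (v : Finset (Fin m) → SS F m) (hsupp : ∀ J, ¬ J ⊆ T → v J = 0)
    (hv : ∀ I, DD v I = if I = ∅ then X (Sum.inl t) * β else 0) :
    ∃ w : Finset (Fin m) → SS F m, (∀ J, ¬ J ⊆ T → w J = 0) ∧
      ∀ I, DD w I = if I = ∅ then β else 0 := by
  set N := degreeOf (Sum.inl t) β with hN
  refine ⟨fun J => ∑ k ∈ Finset.range (N + 1), X (Sum.inl t) ^ k * lam t (k + 1) (v J),
    ?_, ?_⟩
  · intro J hJ
    show (∑ k ∈ Finset.range (N + 1), X (Sum.inl t) ^ k * lam t (k + 1) (v J)) = 0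
    rw [hsupp J hJ]
    refine Finset.sum_eq_zero fun k _ => ?_
    rw [lam_zero, mul_zero]
  · intro I
    have hcomm : ∀ k, ∑ J ∈ Finset.univ.filter (fun J => I ⊂ J),
        xmon (J \ I) * lam t (k + 1) (v J) = lam t (k + 1) (DD v I) := by
      intro k
      unfold DD
      rw [lam_sum]
      refine Finset.sum_congr rfl fun J hJ => ?_
      by_cases hJT : J ⊆ T
      · have htJI : t ∉ J \ I := fun h => ht (hJT (Finset.mem_sdiff.1 h).1)
        rw [lam_xmon_mul t (k+1) _ htJI]
      · simp [hsupp J hJT, lam_zero]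
    have hDD : DD (fun J => ∑ k ∈ Finset.range (N + 1),
        X (Sum.inl t) ^ k * lam t (k + 1) (v J)) I
        = ∑ k ∈ Finset.range (N + 1), X (Sum.inl t) ^ k * lam t (k + 1) (DD v I) := by
      calc DD (fun J => ∑ k ∈ Finset.range (N + 1),
            X (Sum.inl t) ^ k * lam t (k + 1) (v J)) I
          = ∑ J ∈ Finset.univ.filter (fun J => I ⊂ J), ∑ k ∈ Finset.range (N + 1),
              X (Sum.inl t) ^ k * (xmon (J \ I) * lam t (k + 1) (v J)) := by
            unfold DD
            refine Finset.sum_congr rfl fun J _ => ?_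
            rw [Finset.mul_sum]
            exact Finset.sum_congr rfl fun k _ => by ring
        _ = ∑ k ∈ Finset.range (N + 1), ∑ J ∈ Finset.univ.filter (fun J => I ⊂ J),
              X (Sum.inl t) ^ k * (xmon (J \ I) * lam t (k + 1) (v J)) := Finset.sum_comm
        _ = ∑ k ∈ Finset.range (N + 1), X (Sum.inl t) ^ k * lam t (k + 1) (DD v I) := by
            refine Finset.sum_congr rfl fun k _ => ?_
            rw [← Finset.mul_sum, hcomm k]
    rw [hDD, hv I]
    by_cases hI : I = ∅
    · rw [if_pos hI, if_pos hI]
      have : ∀ k, lam t (k + 1) (X (Sum.inl t) * β) = lam t k β := fun k => lam_shift t k β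
      rw [Finset.sum_congr rfl fun k _ => by rw [this k]]
      exact (lam_reconstruct t β N (le_refl _)).symm
    · rw [if_neg hI, if_neg hI]
      refine Finset.sum_eq_zero fun k _ => ?_
      rw [lam_zero, mul_zero]

lemma core (T : Finset (Fin m)) :
    ∀ c : Finset (Fin m) → SS F m, (∀ J, ¬ J ⊆ T → c J = 0) → (∀ I, DD c I = 0) →
    ∃ a : SS F m, ∃ d : Finset (Fin m) → SS F m, (∀ J, ¬ J ⊆ T → d J = 0) ∧
      ∀ J, c J = (if J = ∅ then a else 0) + DD d J := by
  induction T using Finset.induction_on with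
  | empty =>
      intro c hsupp hker
      refine ⟨c ∅, fun _ => 0, fun _ _ => rfl, fun J => ?_⟩
      rw [DD_zero]
      by_cases hJ : J = ∅
      · subst hJ; rw [if_pos rfl, add_zero]
      · rw [if_neg hJ, hsupp J (by simpa [Finset.subset_empty] using hJ), zero_add]
  | @insert t T₀ ht ih =>
      intro c hsupp hker
      have hsupp0 : ∀ J, ¬ J ⊆ T₀ → czero t c J = 0 := by
        intro J hJ
        unfold czero
        by_cases htJ : t ∈ J
        · rw [if_pos htJ]
        · rw [if_neg htJ]
          exact hsupp J (fun h => hJ ((subset_insert_iff_of_not_mem htJ).1 h))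
      have hsupp1 : ∀ J, ¬ J ⊆ T₀ → cone t c J = 0 := by
        intro J hJ
        unfold cone
        by_cases htJ : t ∈ J
        · rw [if_pos htJ]
        · rw [if_neg htJ]
          refine hsupp _ (fun h => hJ ?_)
          intro a ha
          have := h (Finset.mem_insert_of_mem ha)
          rcases Finset.mem_insert.1 this with h' | h'
          · exact absurd (h' ▸ ha) htJ
          · exact h'
      have hker1 : ∀ I, DD (cone t c) I = 0 := by
        intro I
        by_cases htI : t ∈ I
        · exact DD_supp T₀ (cone t c) hsupp1 I (fun hsub => ht (hsub htI))
        · have h0 := hker (insert t I)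
          rw [B2 t c (insert t I) (Finset.mem_insert_self t I),
            Finset.erase_insert htI] at h0
          exact h0
      obtain ⟨β, u, husupp, hu⟩ := ih (cone t c) hsupp1 hker1
      have hE1 : ∀ I, DD (czero t c) I = X (Sum.inl t) * cone t c I := by
        intro I
        by_cases htI : t ∈ I
        · rw [DD_supp T₀ (czero t c) hsupp0 I (fun hsub => ht (hsub htI))]
          have h1 : cone t c I = 0 := by unfold cone; rw [if_pos htI]
          rw [h1, mul_zero]
        · have h0 := hker I
          rw [B1 t c I htI, hker1 I, add_zero] at h0
          exact char2_eq_of_add_eq_zero h0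
      have hsuppv : ∀ J, ¬ J ⊆ T₀ → czero t c J + X (Sum.inl t) * u J = 0 := by
        intro J hJ
        rw [hsupp0 J hJ, husupp J hJ, mul_zero, add_zero]
      have hDv : ∀ I, DD (fun J => czero t c J + X (Sum.inl t) * u J) I
          = if I = ∅ then X (Sum.inl t) * β else 0 := by
        intro I
        rw [DD_add, DD_mul_left, hE1 I, hu I]
        by_cases hI : I = ∅
        · rw [if_pos hI, if_pos hI]
          linear_combination (X (Sum.inl t) * DD u I) * (two_zero : (2 : SS F m) = 0)
        · rw [if_neg hI, if_neg hI]
          linear_combination (X (Sum.inl t) * DD u I) * (two_zero : (2 : SS F m) = 0)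
      obtain ⟨w, hwsupp, hw⟩ := saturation T₀ t ht β _ hsuppv hDv
      have hw'supp : ∀ J, ¬ J ⊆ T₀ → u J + w J = 0 := by
        intro J hJ
        rw [husupp J hJ, hwsupp J hJ, add_zero]
      have hc1 : ∀ I, cone t c I = DD (fun J => u J + w J) I := by
        intro I
        rw [DD_add, hu I, hw I]
        ring
      have hg : ∀ I, DD (fun J => czero t c J
          + X (Sum.inl t) * (u J + w J)) I = 0 := by
        intro I
        rw [DD_add, DD_mul_left, hE1 I, hc1 I]
        linear_combination (X (Sum.inl t) * DD (fun J => u J + w J) I)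
          * (two_zero : (2 : SS F m) = 0)
      have hgsupp : ∀ J, ¬ J ⊆ T₀ → czero t c J + X (Sum.inl t) * (u J + w J) = 0 := by
        intro J hJ
        rw [hsupp0 J hJ, hw'supp J hJ, mul_zero, add_zero]
      obtain ⟨γ, u'', hu''supp, hg'⟩ := ih _ hgsupp hg
      refine ⟨γ, fun J => if t ∈ J then u (J.erase t) + w (J.erase t)
        else u'' J + czero t c J, ?_, ?_⟩
      · intro J hJ
        change (if t ∈ J then u (J.erase t) + w (J.erase t) else u'' J + czero t c J) = 0
        by_cases htJ : t ∈ J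
        · rw [if_pos htJ]
          refine hw'supp _ ?_
          intro hsub
          apply hJ
          intro a ha
          by_cases hat : a = t
          · exact hat ▸ Finset.mem_insert_self t T₀
          · exact Finset.mem_insert_of_mem (hsub (Finset.mem_erase.2 ⟨hat, ha⟩))
        · rw [if_neg htJ]
          have hJT₀ : ¬ J ⊆ T₀ := fun h => hJ (h.trans (Finset.subset_insert t T₀))
          rw [hu''supp J hJT₀, hsupp0 J hJT₀, add_zero]
      · intro J
        set d : Finset (Fin m) → SS F m := fun J => if t ∈ J then u (J.erase t) + w (J.erase t)
          else u'' J + czero t c J with hd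
        have hconed : cone t d = fun K => u K + w K := by
          funext K
          unfold cone
          by_cases htK : t ∈ K
          · rw [if_pos htK]
            exact (hw'supp K (fun h => ht (h htK))).symm
          · rw [if_neg htK]
            simp only [hd]
            rw [if_pos (Finset.mem_insert_self t K), Finset.erase_insert htK]
        have hzerod : czero t d = fun K => u'' K + czero t c K := by
          funext K
          show (if t ∈ K then 0 else d K) = u'' K + czero t c K
          by_cases htK : t ∈ K
          · rw [if_pos htK]
            have h1 : u'' K = 0 := hu''supp K (fun h => ht (h htK))
            have h2 : czero t c K = 0 := hsupp0 K (fun h => ht (h htK))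
            rw [h1, h2, add_zero]
          · rw [if_neg htK]
            simp only [hd]
            rw [if_neg htK]
        by_cases htJ : t ∈ J
        · rw [B2 t d J htJ, hconed, ← hc1 (J.erase t)]
          have hcc : cone t c (J.erase t) = c J := by
            unfold cone
            rw [if_neg (Finset.notMem_erase t J), Finset.insert_erase htJ]
          rw [hcc, if_neg (by rintro rfl; exact (Finset.notMem_empty t) htJ), zero_add]
        · rw [B1 t d J htJ, hconed, hzerod, DD_add]
          have h1 := hg' J
          have h2 := hE1 J
          have h3 := hc1 J
          have h4 : czero t c J = c J := by unfold czero; rw [if_neg htJ]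
          linear_combination h4.symm + h1 - h2 - X (Sum.inl t) * h3
            - (X (Sum.inl t) * (u J + w J)
              + X (Sum.inl t) * DD (fun K => u K + w K) J)
              * (two_zero : (2 : SS F m) = 0)

lemma Psi_delta (a : SS F m) : Psi (fun J => if J = ∅ then a else 0) = phi a := by
  unfold Psi
  rw [Finset.sum_eq_single ∅]
  · show phi (if (∅ : Finset (Fin m)) = ∅ then a else 0) * ymon ∅ = phi a
    rw [if_pos rfl]
    unfold ymon
    rw [Finset.prod_empty, mul_one]
  · intro J _ hJ
    show phi (if J = ∅ then a else 0) * ymon J = 0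
    rw [if_neg hJ, map_zero, zero_mul]
  · simp

section Final
variable (σ : SS F m ≃ₐ[F] SS F m)
  (hx : ∀ j : Fin m, σ (X (Sum.inl j)) = X (Sum.inl j))
  (hy : ∀ j : Fin m, σ (X (Sum.inr j)) = X (Sum.inr j) + X (Sum.inl j))

include hx hy

lemma sub_expand (d : Finset (Fin m) → SS F m) :
    σ (Psi d) - Psi d = ∑ J : Finset (Fin m), phi (d J) * (σ (ymon J) - ymon J) := by
  unfold Psi
  rw [map_sum σ (fun J => phi (d J) * ymon J) Finset.univ, ← Finset.sum_sub_distrib]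
  refine Finset.sum_congr rfl fun J _ => ?_
  rw [map_mul, sig_phi σ hx hy]
  ring

lemma main_ge (f : SS F m) (hf : σ f = f) :
    ∃ a : SS F m, ∃ d : Finset (Fin m) → SS F m,
      f = phi a + ∑ J : Finset (Fin m), phi (d J) * (σ (ymon J) - ymon J) := by
  obtain ⟨c, hc⟩ := Psi_surj f
  have hDc : ∀ I, DD c I = 0 := by
    have h1 := intertwine σ hx hy c
    rw [hc, hf, sub_self] at h1
    exact Psi_inj (DD c) h1.symm
  obtain ⟨a, d, -, hcd⟩ := core Finset.univ c
    (fun J hJ => absurd (Finset.subset_univ J) hJ) hDc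
  refine ⟨a, d, ?_⟩
  have hceq : c = fun J => (if J = ∅ then a else 0) + DD d J := funext hcd
  rw [← hc, hceq, Psi_add, Psi_delta, ← intertwine σ hx hy d, sub_expand σ hx hy d]

end Final

end Stmt0

open Stmt0

theorem stmt_0 (F : Type) [Field F] [CharP F 2] (m : ℕ)
    (σ : MvPolynomial (Fin m ⊕ Fin m) F ≃ₐ[F] MvPolynomial (Fin m ⊕ Fin m) F)
    (hx : ∀ j : Fin m, σ (X (Sum.inl j)) = X (Sum.inl j))
    (hy : ∀ j : Fin m, σ (X (Sum.inr j)) = X (Sum.inr j) + X (Sum.inl j)) :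
    Algebra.adjoin F
      ((Set.range fun i : Fin m =>
          (X (Sum.inr i) : MvPolynomial (Fin m ⊕ Fin m) F) ^ 2 + X (Sum.inl i) * X (Sum.inr i)) ∪
        (Set.range fun J : Finset (Fin m) =>
          σ (∏ j ∈ J, X (Sum.inr j)) -
            ∏ j ∈ J, (X (Sum.inr j) : MvPolynomial (Fin m ⊕ Fin m) F)))
      = AlgHom.equalizer (σ : MvPolynomial (Fin m ⊕ Fin m) F →ₐ[F] _) (AlgHom.id F _) := by
  have h2 : (2 : MvPolynomial (Fin m ⊕ Fin m) F) = 0 := Stmt0.two_zero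
  set G : Set (MvPolynomial (Fin m ⊕ Fin m) F) :=
    (Set.range fun i : Fin m =>
        (X (Sum.inr i) : MvPolynomial (Fin m ⊕ Fin m) F) ^ 2 + X (Sum.inl i) * X (Sum.inr i)) ∪
      (Set.range fun J : Finset (Fin m) =>
        σ (∏ j ∈ J, X (Sum.inr j)) -
          ∏ j ∈ J, (X (Sum.inr j) : MvPolynomial (Fin m ⊕ Fin m) F)) with hG
  have hymon : ∀ J : Finset (Fin m), (ymon J : SS F m) = ∏ j ∈ J, X (Sum.inr j) := by
    intro J
    unfold Stmt0.ymon Stmt0.yy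
    rfl
  have hgen2 : ∀ J : Finset (Fin m),
      σ (ymon J) - ymon J ∈ Algebra.adjoin F G := by
    intro J
    apply Algebra.subset_adjoin
    rw [hG]
    right
    exact ⟨J, by rw [hymon]⟩
  have hgen1 : ∀ i : Fin m, (nn i : SS F m) ∈ Algebra.adjoin F G := by
    intro i
    apply Algebra.subset_adjoin
    rw [hG]
    left
    exact ⟨i, rfl⟩
  have hphi : ∀ p : SS F m, phi p ∈ Algebra.adjoin F G := by
    intro p
    have hmem : phi p ∈ Algebra.adjoin F (Set.range (Sum.elim (xx : Fin m → SS F m) nn)) := by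
      rw [Algebra.adjoin_range_eq_range_aeval]
      exact ⟨p, rfl⟩
    refine Algebra.adjoin_le ?_ hmem
    rintro g ⟨v, rfl⟩
    obtain (j | j) := v
    · show (xx j : SS F m) ∈ Algebra.adjoin F G
      have hxval : (xx j : SS F m) = σ (ymon {j}) - ymon {j} := by
        unfold Stmt0.ymon
        rw [Finset.prod_singleton]
        unfold Stmt0.yy Stmt0.xx
        rw [hy j]
        ring
      rw [hxval]
      exact hgen2 {j}
    · exact hgen1 j
  apply le_antisymm
  · rw [Algebra.adjoin_le_iff]
    rintro g (⟨i, rfl⟩ | ⟨J, rfl⟩)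
    · have := sig_nn σ hx hy i
      unfold Stmt0.nn Stmt0.xx Stmt0.yy at this
      exact this
    · show σ _ = AlgHom.id F _ _
      have hσσ := sig_sq σ hx hy (∏ j ∈ J, (X (Sum.inr j) : MvPolynomial (Fin m ⊕ Fin m) F))
      simp only [AlgHom.coe_coe, AlgHom.id_apply, map_sub, hσσ]
      linear_combination ((∏ j ∈ J, (X (Sum.inr j) : MvPolynomial (Fin m ⊕ Fin m) F))
        - σ (∏ j ∈ J, X (Sum.inr j))) * h2
  · intro f hf
    have hff : σ f = f := by
      have := hf
      simpa using this
    obtain ⟨a, d, hfd⟩ := main_ge σ hx hy f hff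
    rw [hfd]
    refine Subalgebra.add_mem _ (hphi a) (Subalgebra.sum_mem _ fun J _ => ?_)
    exact Subalgebra.mul_mem _ (hphi (d J)) (hgen2 J)
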